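/- Let N be a Petri net with a vertex cover VC of G(N). Suppose σ = σ₁'σ̲₁σ₂'⋯σ_α'σ̲_α is a Y-neglecting weakly M, Q, ω-enabled X-pumping sequence. Then for any n₁, n₁', n₂, n₂', …, n_α ∈ ℕ, the sequence σ' = σ₁'σ₁^{n₁}σ̲₁σ₁^{n₁'}σ₂'⋯σ_α'σ_α^{n_α}σ̲_α is also a Y-neglecting weakly M, Q, ω-enabled X-pumping sequence, where σ_λ denotes the same transition sequence as σ̲_λ but the copies σ_λ^{n_λ}, σ_λ^{n_λ'} are not counted as pumping portions (only the displayed σ̲_λ are the pumping portions of σ'). -/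

import Mathlib

open Finset

/-- A Petri net on places `P` and transitions `T`,
given by the two incidence functions. -/
structure PetriNet (P T : Type) where
  Pre : P → T → ℕ
  Post : P → T → ℕ

namespace PetriNet

variable {P T : Type}

/-- The effect of firing a single transition on the number of tokens in a place. -/
def eff (N : PetriNet P T) (t : T) (p : P) : ℤ :=
  (N.Post p t : ℤ) - (N.Pre p t : ℤ)

/-- The total effect of a sequence of transitions on a place. -/
def seqEff (N : PetriNet P T) (σ : List T) (p : P) : ℤ :=
  (σ.map fun t => N.eff t p).sum

/-- The effect on `p` of the transition at position `i` of `σ` (`0` if out of range). -/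
def effAt (N : PetriNet P T) (σ : List T) (i : ℕ) (p : P) : ℤ :=
  N.seqEff ((σ.drop i).take 1) p

/-- `W` is an upper bound for all arc weights, and `W ≥ 1`. -/
def WeightBound (N : PetriNet P T) (W : ℕ) : Prop :=
  1 ≤ W ∧ ∀ p t, N.Pre p t ≤ W ∧ N.Post p t ≤ W

/-- The firing sequence `σ` is enabled at the marking `M₀`. -/
def SeqEnabled (N : PetriNet P T) (M₀ : P → ℕ) (σ : List T) : Prop :=
  ∀ i (hi : i < σ.length) (p : P),
    (N.Pre p (σ.get ⟨i, hi⟩) : ℤ) ≤ (M₀ p : ℤ) + N.seqEff (σ.take i) p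

/-- `M₀ ⟹σ M` : firing `σ` at `M₀` yields `M`. -/
def Fires (N : PetriNet P T) (M₀ : P → ℕ) (σ : List T) (M : P → ℕ) : Prop :=
  N.SeqEnabled M₀ σ ∧ ∀ p, (M p : ℤ) = (M₀ p : ℤ) + N.seqEff σ p

/-- `M` is reachable from `M₀`. -/
def Reachable (N : PetriNet P T) (M₀ M : P → ℕ) : Prop :=
  ∃ σ : List T, N.Fires M₀ σ M

/-- Adjacency in the graph `G(N)` associated with the net. -/
def Adj (N : PetriNet P T) (p₁ p₂ : P) : Prop :=
  ∃ t, 1 ≤ N.Pre p₁ t + N.Post p₁ t ∧ 1 ≤ N.Pre p₂ t + N.Post p₂ t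

/-- `VC` is a vertex cover of `G(N)`. -/
def IsVertexCover (N : PetriNet P T) (VC : Set P) : Prop :=
  ∀ p₁ p₂, N.Adj p₁ p₂ → p₁ ∈ VC ∨ p₂ ∈ VC

/-- The two transitions have the same type (relative to the vertex cover `VC`). -/
def SameType (N : PetriNet P T) (VC : Set P) (t₁ t₂ : T) : Prop :=
  ∀ p ∈ VC, N.Pre p t₁ = N.Pre p t₂ ∧ N.Post p t₁ = N.Post p t₂

/-- The two places (both outside the vertex cover `VC`) have the same variety:
for every type of transitions and every nonzero weight `w`, some transition of that
type has effect `w` on `p₁` iff some transition of that type has effect `w` on `p₂`. -/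
def SameVariety (N : PetriNet P T) (VC : Set P) (p₁ p₂ : P) : Prop :=
  p₁ ∉ VC ∧ p₂ ∉ VC ∧
  ∀ (t : T) (w : ℤ), w ≠ 0 →
    ((∃ t', N.SameType VC t t' ∧ N.eff t' p₁ = w) ↔
     (∃ t', N.SameType VC t t' ∧ N.eff t' p₂ = w))

/-- A choice, for each variety of a place outside `VC`, of one designated
special place of that variety. -/
structure SpecialChoice (N : PetriNet P T) (VC : Set P) where
  sp : P → P
  not_mem : ∀ p, p ∉ VC → sp p ∉ VC
  variety : ∀ p, p ∉ VC → N.SameVariety VC p (sp p)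
  const : ∀ p₁ p₂, p₁ ∉ VC → p₂ ∉ VC → N.SameVariety VC p₁ p₂ → sp p₁ = sp p₂

/-- The set `S` of special places. -/
def specialSet (N : PetriNet P T) (VC : Set P) (C : N.SpecialChoice VC) : Set P :=
  VC ∪ {q | ∃ p, p ∉ VC ∧ C.sp p = q}

/-- The set `I` of independent places. -/
def indepSet (N : PetriNet P T) (VC : Set P) (C : N.SpecialChoice VC) : Set P :=
  (N.specialSet VC C)ᶜ

/-- All intermediate markings along `σ` from the integer marking `M` are
nonnegative on `Q`. -/
def QRun (N : PetriNet P T) (Q : Set P) (M : P → ℤ) (σ : List T) : Prop :=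
  ∀ i, i ≤ σ.length → ∀ q ∈ Q, 0 ≤ M q + N.seqEff (σ.take i) q

/-- `σ` is `Q`-covering from `M`, with target marking `Mcov`. -/
def QCovering (N : PetriNet P T) (Q : Set P) (Mcov : P → ℕ) (M : P → ℤ)
    (σ : List T) : Prop :=
  N.QRun Q M σ ∧ ∀ q ∈ Q, (Mcov q : ℤ) ≤ M q + N.seqEff σ q

/-- `lencov Q M Mcov` : the length of the shortest `Q`-covering sequence from `M`
(`0` if there is none). -/
noncomputable def lencov (N : PetriNet P T) (Q : Set P) (M : P → ℤ)
    (Mcov : P → ℕ) : ℕ :=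
  sInf {r | ∃ σ : List T, σ.length = r ∧ N.QCovering Q Mcov M σ}

/-- `ℓ(i)`, as an extended natural number. -/
noncomputable def ellCov (N : PetriNet P T) (VC : Set P) (C : N.SpecialChoice VC)
    (Mcov : P → ℕ) (i : ℕ) : ℕ∞ :=
  ⨆ (Q : Set P) (_ : N.indepSet VC C ⊆ Q)
    (_ : (Q \ N.indepSet VC C).ncard = i) (M : P → ℤ),
    (N.lencov Q M Mcov : ℕ∞)

/-- `σ` is a `Q`-enabled self-covering sequence from the integer marking `M`. -/
def QSelfCovering (N : PetriNet P T) (Q : Set P) (M : P → ℤ) (σ : List T) : Prop :=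
  N.QRun Q M σ ∧ ∃ r' < σ.length,
    (∀ p, M p + N.seqEff (σ.take r') p ≤ M p + N.seqEff σ p) ∧
    (fun p => M p + N.seqEff (σ.take r') p) ≠ (fun p => M p + N.seqEff σ p)

/-- `σ` is a self-covering sequence enabled at the marking `M₀`. -/
def SelfCovering (N : PetriNet P T) (M₀ : P → ℕ) (σ : List T) : Prop :=
  N.SeqEnabled M₀ σ ∧ ∃ r' < σ.length,
    (∀ p, (M₀ p : ℤ) + N.seqEff (σ.take r') p ≤ (M₀ p : ℤ) + N.seqEff σ p) ∧
    (fun p => (M₀ p : ℤ) + N.seqEff (σ.take r') p) ≠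
      (fun p => (M₀ p : ℤ) + N.seqEff σ p)

open scoped Classical in
/-- `slencov(Q, j, M)` (relative to the fixed bound `U'` and the set `Ind` of
independent places). -/
noncomputable def slencov (N : PetriNet P T) (Ind : Set P) (U' W j : ℕ)
    (Q : Set P) (M : P → ℤ) : ℕ :=
  if ∃ σ : List T, N.QSelfCovering Q M σ ∧
      ∀ i ≤ σ.length, ∀ p ∈ Ind,
        M p + N.seqEff (σ.take i) p ≤ ((U' + j * W : ℕ) : ℤ)
  then sInf {r | ∃ σ : List T, σ.length = r ∧ N.QSelfCovering Q M σ}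
  else 0

/-- `ℓ₁(i, j)`, as an extended natural number. -/
noncomputable def ell1 (N : PetriNet P T) (VC : Set P) (C : N.SpecialChoice VC)
    (U' W : ℕ) (i j : ℕ) : ℕ∞ :=
  ⨆ (Q : Set P) (_ : N.indepSet VC C ⊆ Q)
    (_ : (Q \ N.indepSet VC C).ncard = i) (M : P → ℤ),
    (N.slencov (N.indepSet VC C) U' W j Q M : ℕ∞)

/-- The transition sequence underlying a decomposition
`σ₁'σ̲₁σ₂'σ̲₂⋯σ_α'σ̲_α`, given as the list of pairs `(σ_λ', σ̲_λ)`. -/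
def decompSeq (D : List (List T × List T)) : List T :=
  (D.map fun x => x.1 ++ x.2).flatten

/-- Conditions (1)–(2) of an `X`-pumping sequence, for the list `pumps` of
pumping portions. -/
def PumpingConds (N : PetriNet P T) (X : Set P) (pumps : List (List T)) : Prop :=
  (∀ l (hl : l < pumps.length) (p : P),
      N.seqEff (pumps.get ⟨l, hl⟩) p < 0 →
      ∃ μ, ∃ hμ : μ < l, 0 < N.seqEff (pumps.get ⟨μ, hμ.trans hl⟩) p) ∧
  ∀ x ∈ X, ∃ l, ∃ hl : l < pumps.length, 0 < N.seqEff (pumps.get ⟨l, hl⟩) x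

/-- `σ` is an `X`-pumping sequence enabled at `M₀`. -/
def IsPumpingSeq (N : PetriNet P T) (M₀ : P → ℕ) (X : Set P) (σ : List T) : Prop :=
  N.SeqEnabled M₀ σ ∧
  ∃ D : List (List T × List T), decompSeq D = σ ∧ N.PumpingConds X (D.map Prod.snd)

/-- The position in `decompSeq D` just after the `μ`-th pumping portion. -/
def endPos (D : List (List T × List T)) (μ : ℕ) : ℕ :=
  (decompSeq (D.take (μ + 1))).length

/-- Position `i` of `decompSeq D` lies in the caring zone of the place `p`. -/
def InCaringZone (N : PetriNet P T) (D : List (List T × List T)) (p : P)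
    (i : ℕ) : Prop :=
  ∀ μ (hμ : μ < D.length), 0 < N.seqEff (D.get ⟨μ, hμ⟩).2 p → i ≤ endPos D μ

/-- The decomposition `D` witnesses that `decompSeq D` is a `Y`-neglecting weakly
`M, Q, c`-enabled `X`-pumping sequence (`Ind` is the set of independent places and
`c = ⊤` encodes `ω`). -/
def IsWeakPumping (N : PetriNet P T) (Ind Q Y X : Set P) (M : P → ℤ)
    (c : WithTop ℤ) (D : List (List T × List T)) : Prop :=
  (∀ l (hl : l < D.length) (p : P),
      N.seqEff (D.get ⟨l, hl⟩).2 p < 0 →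
      (∃ μ, ∃ hμ : μ < l, 0 < N.seqEff (D.get ⟨μ, hμ.trans hl⟩).2 p) ∨ p ∈ Y) ∧
  (∀ x ∈ X, x ∉ Y ∧ ∃ l, ∃ hl : l < D.length, 0 < N.seqEff (D.get ⟨l, hl⟩).2 x) ∧
  (∀ i ≤ (decompSeq D).length, ∀ q ∈ Q, q ∉ Ind →
      ((M q + N.seqEff ((decompSeq D).take i) q : ℤ) : WithTop ℤ) < c) ∧
  (∀ i ≤ (decompSeq D).length, ∀ p ∈ Q,
      M p + N.seqEff ((decompSeq D).take i) p < 0 →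
      (∃ μ, ∃ hμ : μ < D.length, endPos D μ ≤ i ∧
        0 < N.seqEff (D.get ⟨μ, hμ⟩).2 p) ∨ p ∈ Y)

open scoped Classical in
/-- `pumlen(Q, j, M, X, Y)` (relative to the fixed bound `U'` and the set `Ind`
of independent places). -/
noncomputable def pumlen (N : PetriNet P T) (Ind : Set P) (U' W j : ℕ)
    (Q : Set P) (M : P → ℤ) (X Y : Set P) : ℕ :=
  if ∃ D : List (List T × List T), N.IsWeakPumping Ind Q Y X M ⊤ D ∧
      ∀ p ∈ Ind, p ∉ Y → ∀ i ≤ (decompSeq D).length, N.InCaringZone D p i →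
        M p + N.seqEff ((decompSeq D).take i) p ≤ ((U' + j * W : ℕ) : ℤ)
  then sInf {r | ∃ D : List (List T × List T),
      (decompSeq D).length = r ∧ N.IsWeakPumping Ind Q Y X M ⊤ D}
  else 0

/-- `ℓ₂(i, j)`, as an extended natural number. -/
noncomputable def ell2 (N : PetriNet P T) (VC : Set P) (C : N.SpecialChoice VC)
    (U' W : ℕ) (i j : ℕ) : ℕ∞ :=
  ⨆ (Q : Set P) (_ : N.indepSet VC C ⊆ Q)
    (_ : (Q \ N.indepSet VC C).ncard = i) (M : P → ℤ)
    (X : Set P) (Y : Set P) (_ : X.Nonempty),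
    (N.pumlen (N.indepSet VC C) U' W j Q M X Y : ℕ∞)

/-- The sub-word of `σ` given by the set `s` of positions is safe for transfer
from the place `p`: every prefix has nonnegative total effect on `p`. -/
def SubwordSafe (N : PetriNet P T) (σ : List T) (s : Finset ℕ) (p : P) : Prop :=
  ∀ j : ℕ, 0 ≤ ∑ i ∈ s.filter (fun i => i < j), N.effAt σ i p

/-- `σ'` is obtained from `σ` by transferring the sub-word at the positions `s`
from the place `p₁` to the place `p₂`. -/
def IsTransfer (N : PetriNet P T) (VC : Set P) (p₁ p₂ : P) (σ : List T)
    (s : Finset ℕ) (σ' : List T) : Prop :=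
  σ'.length = σ.length ∧
  (∀ i ∈ s, i < σ.length) ∧
  ∀ i (hi : i < σ.length) (hi' : i < σ'.length),
    if i ∈ s then
      N.SameType VC (σ.get ⟨i, hi⟩) (σ'.get ⟨i, hi'⟩) ∧
      (N.Pre p₁ (σ.get ⟨i, hi⟩) ≠ 0 ∨ N.Post p₁ (σ.get ⟨i, hi⟩) ≠ 0) ∧
      N.Pre p₂ (σ'.get ⟨i, hi'⟩) = N.Pre p₁ (σ.get ⟨i, hi⟩) ∧
      N.Post p₂ (σ'.get ⟨i, hi'⟩) = N.Post p₁ (σ.get ⟨i, hi⟩)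
    else σ'.get ⟨i, hi'⟩ = σ.get ⟨i, hi⟩

/-- The decomposition `σ₁'σ₁^{n₁}σ̲₁σ₁^{n₁'}σ₂'⋯σ_α'σ_α^{n_α}σ̲_α` obtained from
`D` by inserting extra (non-pumping) copies of the pumping portions. -/
def replicateDecomp (D : List (List T × List T)) (n n' : ℕ → ℕ) :
    List (List T × List T) :=
  D.mapIdx fun l pr =>
    ((if l = 0 then ([] : List T)
        else (List.replicate (n' (l - 1)) (D.getD (l - 1) ([], [])).2).flatten)
       ++ pr.1 ++ (List.replicate (n l) pr.2).flatten, pr.2)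


section ReplicateAux

lemma seqEff_nil (N : PetriNet P T) (p : P) : N.seqEff [] p = 0 := rfl

lemma seqEff_append (N : PetriNet P T) (σ τ : List T) (p : P) :
    N.seqEff (σ ++ τ) p = N.seqEff σ p + N.seqEff τ p := by
  simp [seqEff]

lemma seqEff_flatten_replicate (N : PetriNet P T) (a : ℕ) (l : List T) (p : P) :
    N.seqEff (List.replicate a l).flatten p = (a : ℤ) * N.seqEff l p := by
  induction a with
  | zero => simp [seqEff]
  | succ a ih =>
    rw [List.replicate_succ, List.flatten_cons, N.seqEff_append, ih]
    push_cast
    ring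

lemma length_flatten_replicate {α : Type*} (a : ℕ) (l : List α) :
    (List.replicate a l).flatten.length = a * l.length := by
  induction a with
  | zero => simp
  | succ a ih =>
    rw [List.replicate_succ, List.flatten_cons, List.length_append, ih]
    ring

lemma decompSeq_append (D E : List (List T × List T)) :
    decompSeq (D ++ E) = decompSeq D ++ decompSeq E := by
  simp [decompSeq]

lemma decompSeq_singleton (x : List T × List T) :
    decompSeq [x] = x.1 ++ x.2 := by
  simp [decompSeq]

lemma endPos_le (D : List (List T × List T)) (ν : ℕ) :
    endPos D ν ≤ (decompSeq D).length := by
  conv_rhs => rw [← List.take_append_drop (ν + 1) D]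
  rw [decompSeq_append, List.length_append]
  exact Nat.le_add_right _ _

lemma endPos_concat (D : List (List T × List T)) (x : List T × List T) {ν : ℕ}
    (hν : ν < D.length) : endPos (D ++ [x]) ν = endPos D ν := by
  unfold endPos
  rw [List.take_append_of_le_length hν]

lemma take_append_add {α : Type*} (l₁ l₂ : List α) (m : ℕ) :
    (l₁ ++ l₂).take (l₁.length + m) = l₁ ++ l₂.take m := by
  rw [List.take_append, List.take_of_length_le (Nat.le_add_right _ _),
    Nat.add_sub_cancel_left]

lemma take_flatten_replicate {l : List T} (hl : l ≠ []) (a : ℕ) :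
    ∀ j ≤ a * l.length, ∃ q b, b < l.length ∧
      (List.replicate a l).flatten.take j = (List.replicate q l).flatten ++ l.take b := by
  induction a with
  | zero =>
    intro j hj
    refine ⟨0, 0, List.length_pos_iff.mpr hl, ?_⟩
    simp only [Nat.zero_mul, Nat.le_zero] at hj
    simp [hj]
  | succ a ih =>
    intro j hj
    rw [List.replicate_succ, List.flatten_cons]
    by_cases hjl : j < l.length
    · refine ⟨0, j, hjl, ?_⟩
      rw [List.take_append_of_le_length hjl.le]
      simp
    · push_neg at hjl
      have hj' : j - l.length ≤ a * l.length := by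
        rw [Nat.succ_mul] at hj
        omega
      obtain ⟨q, b, hb, heq⟩ := ih (j - l.length) hj'
      refine ⟨q + 1, b, hb, ?_⟩
      rw [List.take_append, List.take_of_length_le hjl, heq,
        List.replicate_succ, List.flatten_cons, List.append_assoc]

lemma replicateDecomp_concat (D : List (List T × List T)) (x : List T × List T)
    (n n' : ℕ → ℕ) :
    replicateDecomp (D ++ [x]) n n' =
      replicateDecomp D n n' ++
        [((if D.length = 0 then ([] : List T)
             else (List.replicate (n' (D.length - 1)) (D.getD (D.length - 1) ([], [])).2).flatten)
            ++ x.1 ++ (List.replicate (n D.length) x.2).flatten, x.2)] := by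
  unfold replicateDecomp
  rw [List.mapIdx_append]
  congr 1
  · apply List.ext_getElem (by simp)
    intro i h1 h2
    rw [List.getElem_mapIdx, List.getElem_mapIdx]
    have hi : i < D.length := by simpa using h2
    by_cases h0 : i = 0
    · simp [h0]
    · have h1' : i - 1 < D.length := by omega
      rw [if_neg h0, if_neg h0, List.getD_append _ _ _ _ h1']
  · simp only [List.mapIdx_cons, List.mapIdx_nil, Nat.zero_add]
    by_cases h0 : D.length = 0
    · simp [h0]
    · have h1' : D.length - 1 < D.length := by omega
      rw [if_neg h0, if_neg h0, List.getD_append _ _ _ _ h1']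

lemma sum_ite_pred (L : ℕ) (g : ℕ → ℤ) :
    ∑ μ ∈ Finset.range L, (if μ + 1 = L then g μ else 0)
      = if L = 0 then 0 else g (L - 1) := by
  cases L with
  | zero => simp
  | succ K =>
    have h : ∀ μ ∈ Finset.range (K + 1),
        (if μ + 1 = K + 1 then g μ else 0) = (if μ = K then g μ else 0) := by
      intro μ _
      simp only [add_left_inj]
    rw [Finset.sum_congr rfl h, Finset.sum_ite_eq' (Finset.range (K + 1)) K g]
    simp

lemma sumB (N : PetriNet P T) (n n' : ℕ → ℕ) (D : List (List T × List T))
    (x : List T × List T) (w z : ℕ) (p : P) :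
    ∑ μ ∈ Finset.range ((D ++ [x]).length),
      ((if μ < D.length then
          n μ + (if μ + 1 < D.length then n' μ else 0) + (if μ + 1 = D.length then w else 0)
        else if μ = D.length then z else 0 : ℕ) : ℤ)
        * N.seqEff ((D ++ [x]).getD μ ([], [])).2 p
    = (∑ μ ∈ Finset.range D.length,
        ((n μ + if μ + 1 < D.length then n' μ else 0 : ℕ) : ℤ)
          * N.seqEff (D.getD μ ([], [])).2 p)
      + (if D.length = 0 then 0
          else (w : ℤ) * N.seqEff (D.getD (D.length - 1) ([], [])).2 p)
      + (z : ℤ) * N.seqEff x.2 p := by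
  have hgetL : (D ++ [x]).getD D.length ([], []) = x := by
    rw [List.getD_eq_getElem _ _ (by simp)]
    exact List.getElem_concat_length rfl _
  rw [show (D ++ [x]).length = D.length + 1 by simp, Finset.sum_range_succ,
    if_neg (lt_irrefl D.length), if_pos rfl, hgetL]
  have h : ∀ μ ∈ Finset.range D.length,
      ((if μ < D.length then
          n μ + (if μ + 1 < D.length then n' μ else 0) + (if μ + 1 = D.length then w else 0)
        else if μ = D.length then z else 0 : ℕ) : ℤ)
        * N.seqEff ((D ++ [x]).getD μ ([], [])).2 p
      = ((n μ + if μ + 1 < D.length then n' μ else 0 : ℕ) : ℤ)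
          * N.seqEff (D.getD μ ([], [])).2 p
        + (if μ + 1 = D.length then (w : ℤ) * N.seqEff (D.getD μ ([], [])).2 p else 0) := by
    intro μ hμ
    have hμ' := Finset.mem_range.mp hμ
    rw [if_pos hμ', List.getD_append _ _ _ _ hμ']
    by_cases hc : μ + 1 = D.length
    · rw [if_pos hc, if_pos hc, if_neg (by omega)]
      push_cast
      ring
    · rw [if_neg hc, if_neg hc]
      push_cast
      ring
  rw [Finset.sum_congr rfl h, Finset.sum_add_distrib,
    sum_ite_pred D.length (fun μ => (w : ℤ) * N.seqEff (D.getD μ ([], [])).2 p)]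

lemma seqEff_replicateDecomp (N : PetriNet P T) (n n' : ℕ → ℕ)
    (D : List (List T × List T)) (p : P) :
    N.seqEff (decompSeq (replicateDecomp D n n')) p
      = N.seqEff (decompSeq D) p
        + ∑ μ ∈ Finset.range D.length,
            ((n μ + if μ + 1 < D.length then n' μ else 0 : ℕ) : ℤ)
              * N.seqEff (D.getD μ ([], [])).2 p := by
  induction D using List.reverseRecOn with
  | nil => simp [replicateDecomp, decompSeq, seqEff]
  | append_singleton D x ih =>
    have hS := N.sumB n n' D x (n' (D.length - 1)) (n D.length) p
    have hbr : (∑ μ ∈ Finset.range ((D ++ [x]).length),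
          ((n μ + if μ + 1 < (D ++ [x]).length then n' μ else 0 : ℕ) : ℤ)
            * N.seqEff ((D ++ [x]).getD μ ([], [])).2 p)
        = ∑ μ ∈ Finset.range ((D ++ [x]).length),
            ((if μ < D.length then
                n μ + (if μ + 1 < D.length then n' μ else 0)
                  + (if μ + 1 = D.length then n' (D.length - 1) else 0)
              else if μ = D.length then n D.length else 0 : ℕ) : ℤ)
              * N.seqEff ((D ++ [x]).getD μ ([], [])).2 p := by
      refine Finset.sum_congr rfl fun μ hμ => ?_
      have hμ' : μ < D.length + 1 := by simpa using Finset.mem_range.mp hμ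
      have hcoef : (n μ + if μ + 1 < (D ++ [x]).length then n' μ else 0)
          = (if μ < D.length then
              n μ + (if μ + 1 < D.length then n' μ else 0)
                + (if μ + 1 = D.length then n' (D.length - 1) else 0)
            else if μ = D.length then n D.length else 0) := by
        simp only [List.length_append, List.length_singleton]
        by_cases h1 : μ < D.length
        · rw [if_pos (by omega : μ + 1 < D.length + 1), if_pos h1]
          by_cases h2 : μ + 1 = D.length
          · rw [if_pos h2, if_neg (by omega), show D.length - 1 = μ by omega]
            omega
          · rw [if_neg h2, if_pos (by omega)]
            omega
        · rw [if_neg (by omega : ¬ (μ + 1 < D.length + 1)), if_neg h1,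
            if_pos (by omega : μ = D.length), show μ = D.length by omega]
          omega
      rw [hcoef]
    have hL : N.seqEff (decompSeq (replicateDecomp (D ++ [x]) n n')) p
        = N.seqEff (decompSeq D) p
          + (∑ μ ∈ Finset.range D.length,
              ((n μ + if μ + 1 < D.length then n' μ else 0 : ℕ) : ℤ)
                * N.seqEff (D.getD μ ([], [])).2 p)
          + (if D.length = 0 then 0
              else (n' (D.length - 1) : ℤ) * N.seqEff (D.getD (D.length - 1) ([], [])).2 p)
          + N.seqEff x.1 p + (n D.length : ℤ) * N.seqEff x.2 p + N.seqEff x.2 p := by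
      rw [replicateDecomp_concat, decompSeq_append, decompSeq_singleton]
      simp only [N.seqEff_append]
      rw [ih]
      by_cases h0 : D.length = 0
      · rw [if_pos h0, if_pos h0]
        simp only [N.seqEff_flatten_replicate, N.seqEff_nil]
        ring
      · rw [if_neg h0, if_neg h0]
        simp only [N.seqEff_flatten_replicate]
        ring
    have hR : N.seqEff (decompSeq (D ++ [x])) p
        = N.seqEff (decompSeq D) p + N.seqEff x.1 p + N.seqEff x.2 p := by
      rw [decompSeq_append, decompSeq_singleton]
      simp only [N.seqEff_append]
      ring
    rw [hL, hR, hbr, hS]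
    ring

end ReplicateAux

lemma corr (N : PetriNet P T) (n n' : ℕ → ℕ) (D : List (List T × List T)) :
    ∀ i ≤ (decompSeq (replicateDecomp D n n')).length,
    ∃ i₀ ≤ (decompSeq D).length, ∃ c : ℕ → ℕ,
      (∀ p, N.seqEff ((decompSeq (replicateDecomp D n n')).take i) p
          = N.seqEff ((decompSeq D).take i₀) p
            + ∑ μ ∈ Finset.range D.length,
                (c μ : ℤ) * N.seqEff (D.getD μ ([], [])).2 p) ∧
      (∀ μ, c μ ≠ 0 → μ < D.length ∧
        ∀ ν < μ, endPos (replicateDecomp D n n') ν ≤ i) ∧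
      (∀ ν < D.length, (D.getD ν ([], [])).2 ≠ [] →
        endPos D ν ≤ i₀ → endPos (replicateDecomp D n n') ν ≤ i) := by
  induction D using List.reverseRecOn with
  | nil =>
    intro i hi
    have hi0 : i = 0 := by simpa [replicateDecomp, decompSeq] using hi
    subst hi0
    exact ⟨0, by simp, fun _ => 0, by simp [replicateDecomp, decompSeq, seqEff],
      by simp, by simp⟩
  | append_singleton D x ih =>
    intro i hi
    have hconcat := replicateDecomp_concat D x n n'
    set rep : List T := (if D.length = 0 then ([] : List T)
        else (List.replicate (n' (D.length - 1)) (D.getD (D.length - 1) ([], [])).2).flatten)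
      with hrepdef
    set reps2 : List T := (List.replicate (n D.length) x.2).flatten with hreps2def
    have hRlen : (replicateDecomp D n n').length = D.length := by
      simp [replicateDecomp]
    have hσ : decompSeq (replicateDecomp (D ++ [x]) n n')
        = decompSeq (replicateDecomp D n n') ++ (rep ++ (x.1 ++ (reps2 ++ x.2))) := by
      rw [hconcat, decompSeq_append, decompSeq_singleton]
      simp [List.append_assoc]
    have hσD : decompSeq (D ++ [x]) = decompSeq D ++ (x.1 ++ x.2) := by
      rw [decompSeq_append, decompSeq_singleton]
    have hend_lt : ∀ ν < D.length, endPos (replicateDecomp (D ++ [x]) n n') ν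
        = endPos (replicateDecomp D n n') ν := by
      intro ν hν
      rw [hconcat]
      exact endPos_concat _ _ (by omega)
    have hendD_lt : ∀ ν < D.length, endPos (D ++ [x]) ν = endPos D ν :=
      fun ν hν => endPos_concat D x hν
    have hendD_L : endPos (D ++ [x]) D.length
        = (decompSeq D).length + (x.1.length + x.2.length) := by
      unfold endPos
      rw [List.take_of_length_le (by simp), hσD, List.length_append, List.length_append]
    have hgetL : (D ++ [x]).getD D.length ([], []) = x := by
      rw [List.getD_eq_getElem _ _ (by simp)]
      exact List.getElem_concat_length rfl _
    by_cases hiold : i ≤ (decompSeq (replicateDecomp D n n')).length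
    · -- the position lies in the old part
      obtain ⟨i₀, hi₀, c, ha, hb, hc⟩ := ih i hiold
      have hbound : i₀ ≤ (decompSeq (D ++ [x])).length := by
        rw [hσD, List.length_append]
        omega
      have hEff : ∀ p, N.seqEff ((decompSeq (replicateDecomp (D ++ [x]) n n')).take i) p
          = N.seqEff ((decompSeq (D ++ [x])).take i₀) p
            + ∑ μ ∈ Finset.range ((D ++ [x]).length),
                ((if μ < D.length then c μ else 0 : ℕ) : ℤ)
                  * N.seqEff ((D ++ [x]).getD μ ([], [])).2 p := by
        intro p
        have ht1 : (decompSeq (replicateDecomp (D ++ [x]) n n')).take i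
            = (decompSeq (replicateDecomp D n n')).take i := by
          rw [hσ, List.take_append_of_le_length hiold]
        have ht2 : (decompSeq (D ++ [x])).take i₀ = (decompSeq D).take i₀ := by
          rw [hσD, List.take_append_of_le_length hi₀]
        have hptw : ∀ μ ∈ Finset.range D.length,
            ((if μ < D.length then c μ else 0 : ℕ) : ℤ)
                * N.seqEff ((D ++ [x]).getD μ ([], [])).2 p
            = (c μ : ℤ) * N.seqEff (D.getD μ ([], [])).2 p := by
          intro μ hμ
          have hμ' := Finset.mem_range.mp hμ
          rw [if_pos hμ', List.getD_append _ _ _ _ hμ']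
        have hs : ∑ μ ∈ Finset.range ((D ++ [x]).length),
              ((if μ < D.length then c μ else 0 : ℕ) : ℤ)
                * N.seqEff ((D ++ [x]).getD μ ([], [])).2 p
            = ∑ μ ∈ Finset.range D.length,
                (c μ : ℤ) * N.seqEff (D.getD μ ([], [])).2 p := by
          rw [show (D ++ [x]).length = D.length + 1 by simp, Finset.sum_range_succ,
            if_neg (lt_irrefl D.length)]
          simp only [Nat.cast_zero, zero_mul, add_zero]
          exact Finset.sum_congr rfl hptw
        rw [ht1, ht2, hs, ha p]
      have hb' : ∀ μ, (if μ < D.length then c μ else 0) ≠ 0 →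
          μ < (D ++ [x]).length ∧
            ∀ ν < μ, endPos (replicateDecomp (D ++ [x]) n n') ν ≤ i := by
        intro μ hμ0
        by_cases hμL : μ < D.length
        · obtain ⟨-, h2⟩ := hb μ (by rwa [if_pos hμL] at hμ0)
          refine ⟨by simp only [List.length_append, List.length_singleton]; omega,
            fun ν hν => ?_⟩
          rw [hend_lt ν (by omega)]
          exact h2 ν hν
        · rw [if_neg hμL] at hμ0
          exact absurd rfl hμ0
      have hc' : ∀ ν < (D ++ [x]).length, ((D ++ [x]).getD ν ([], [])).2 ≠ [] →
          endPos (D ++ [x]) ν ≤ i₀ → endPos (replicateDecomp (D ++ [x]) n n') ν ≤ i := by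
        intro ν hν hne hend
        by_cases hνL : ν < D.length
        · rw [hend_lt ν hνL]
          exact hc ν hνL (by rwa [List.getD_append _ _ _ _ hνL] at hne)
            (by rwa [hendD_lt ν hνL] at hend)
        · have hνe : ν = D.length := by
            simp only [List.length_append, List.length_singleton] at hν
            omega
          subst hνe
          rw [hgetL] at hne
          rw [hendD_L] at hend
          have hx2 : 0 < x.2.length := List.length_pos_iff.mpr hne
          omega
      exact ⟨i₀, hbound, fun μ => if μ < D.length then c μ else 0, hEff, hb', hc'⟩
    · -- the position lies in the new block
      push_neg at hiold
      have hσlen : (decompSeq (replicateDecomp (D ++ [x]) n n')).length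
          = (decompSeq (replicateDecomp D n n')).length
            + (rep.length + (x.1.length + (reps2.length + x.2.length))) := by
      -- lengths
        rw [hσ]
        simp [List.length_append]
      have hreps2len : reps2.length = n D.length * x.2.length := by
        rw [hreps2def]
        exact length_flatten_replicate _ _
      have htakeB : (decompSeq (replicateDecomp (D ++ [x]) n n')).take i
          = decompSeq (replicateDecomp D n n')
            ++ (rep ++ (x.1 ++ (reps2 ++ x.2))).take
                (i - (decompSeq (replicateDecomp D n n')).length) := by
        rw [hσ, List.take_append, List.take_of_length_le hiold.le]
      have hbound_all : ∀ ν < D.length, endPos (replicateDecomp (D ++ [x]) n n') ν ≤ i := by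
        intro ν hν
        rw [hend_lt ν hν]
        exact le_trans (endPos_le _ _) hiold.le
      have hrepval : ∀ p, N.seqEff rep p
          = (if D.length = 0 then 0
              else (n' (D.length - 1) : ℤ)
                * N.seqEff (D.getD (D.length - 1) ([], [])).2 p) := by
        intro p
        by_cases h0 : D.length = 0
        · rw [hrepdef, if_pos h0, if_pos h0]
          rfl
        · rw [hrepdef, if_neg h0, if_neg h0, N.seqEff_flatten_replicate]
      by_cases hB1 : i - (decompSeq (replicateDecomp D n n')).length ≤ rep.length
      · -- inside the inserted copies of the previous pumping portion
        have hj1 : 1 ≤ i - (decompSeq (replicateDecomp D n n')).length := by omega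
        have hL0 : D.length ≠ 0 := by
          intro h0
          have hrnil : rep = [] := by rw [hrepdef, if_pos h0]
          rw [hrnil] at hB1
          simp at hB1
          omega
        have hrepeq : rep = (List.replicate (n' (D.length - 1))
            (D.getD (D.length - 1) ([], [])).2).flatten := by
          rw [hrepdef, if_neg hL0]
        have hDne : D ≠ [] := fun h => hL0 (by rw [h]; rfl)
        obtain ⟨E, y, hE⟩ : ∃ E y, D = E ++ [y] := by
          rcases List.eq_nil_or_concat D with h | ⟨E, y, h⟩
          · exact absurd h hDne
          · exact ⟨E, y, by rw [h, List.concat_eq_append]⟩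
        have hgety : D.getD (D.length - 1) ([], []) = y := by
          rw [hE, List.getD_eq_getElem _ _ (by simp)]
          exact List.getElem_concat_length (by simp) _
        rw [hgety] at hrepeq
        have hreplen : rep.length = n' (D.length - 1) * y.2.length := by
          rw [hrepeq]
          exact length_flatten_replicate _ _
        have hy2ne : y.2 ≠ [] := by
          intro h
          have h0 : rep.length = 0 := by
            rw [hreplen, h]
            simp
          omega
        obtain ⟨q, b, hb_lt, heq⟩ := take_flatten_replicate hy2ne (n' (D.length - 1))
          (i - (decompSeq (replicateDecomp D n n')).length) (by rw [← hreplen]; exact hB1)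
        have hsplit : decompSeq D = (decompSeq E ++ y.1) ++ y.2 := by
          rw [hE, decompSeq_append, decompSeq_singleton, List.append_assoc]
        have hlenD : (decompSeq D).length = (decompSeq E ++ y.1).length + y.2.length := by
          rw [hsplit, List.length_append]
        have hlen2 : (decompSeq E ++ y.1).length = (decompSeq E).length + y.1.length :=
          List.length_append
        have hi₀le : (decompSeq E ++ y.1).length + b ≤ (decompSeq D).length := by omega
        have hbound : (decompSeq E ++ y.1).length + b ≤ (decompSeq (D ++ [x])).length := by
          rw [hσD]
          simp only [List.length_append]
          omega
        have hEff : ∀ p, N.seqEff ((decompSeq (replicateDecomp (D ++ [x]) n n')).take i) p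
            = N.seqEff ((decompSeq (D ++ [x])).take ((decompSeq E ++ y.1).length + b)) p
              + ∑ μ ∈ Finset.range ((D ++ [x]).length),
                  ((if μ < D.length then
                      n μ + (if μ + 1 < D.length then n' μ else 0)
                        + (if μ + 1 = D.length then q + 1 else 0)
                    else if μ = D.length then 0 else 0 : ℕ) : ℤ)
                    * N.seqEff ((D ++ [x]).getD μ ([], [])).2 p := by
          intro p
          have hLe : N.seqEff ((decompSeq (replicateDecomp (D ++ [x]) n n')).take i) p
              = N.seqEff (decompSeq D) p
                + (∑ μ ∈ Finset.range D.length,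
                    ((n μ + if μ + 1 < D.length then n' μ else 0 : ℕ) : ℤ)
                      * N.seqEff (D.getD μ ([], [])).2 p)
                + (q : ℤ) * N.seqEff y.2 p + N.seqEff (y.2.take b) p := by
            rw [htakeB, List.take_append_of_le_length hB1, hrepeq, heq]
            simp only [N.seqEff_append]
            rw [N.seqEff_flatten_replicate, N.seqEff_replicateDecomp]
            ring
          have hRe : N.seqEff ((decompSeq (D ++ [x])).take ((decompSeq E ++ y.1).length + b)) p
              = N.seqEff (decompSeq D) p - N.seqEff y.2 p + N.seqEff (y.2.take b) p := by
            rw [hσD, List.take_append_of_le_length hi₀le, hsplit, take_append_add]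
            simp only [N.seqEff_append]
            ring
          have hS := N.sumB n n' D x (q + 1) 0 p
          rw [if_neg hL0, hgety] at hS
          rw [hLe, hRe, hS]
          push_cast
          ring
        have hsupp : ∀ μ, (if μ < D.length then
              n μ + (if μ + 1 < D.length then n' μ else 0)
                + (if μ + 1 = D.length then q + 1 else 0)
            else if μ = D.length then 0 else 0) ≠ 0 → μ < D.length := by
          intro μ h
          by_contra hcon
          apply h
          rw [if_neg hcon]
          simp
        have hb' : ∀ μ, (if μ < D.length then
              n μ + (if μ + 1 < D.length then n' μ else 0)
                + (if μ + 1 = D.length then q + 1 else 0)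
            else if μ = D.length then 0 else 0) ≠ 0 →
            μ < (D ++ [x]).length ∧
              ∀ ν < μ, endPos (replicateDecomp (D ++ [x]) n n') ν ≤ i := by
          intro μ h
          have hμL := hsupp μ h
          exact ⟨by simp only [List.length_append, List.length_singleton]; omega,
            fun ν hν => hbound_all ν (by omega)⟩
        have hc' : ∀ ν < (D ++ [x]).length, ((D ++ [x]).getD ν ([], [])).2 ≠ [] →
            endPos (D ++ [x]) ν ≤ (decompSeq E ++ y.1).length + b →
            endPos (replicateDecomp (D ++ [x]) n n') ν ≤ i := by
          intro ν hν hne hend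
          by_cases hνL : ν < D.length
          · exact hbound_all ν hνL
          · have hνe : ν = D.length := by
              simp only [List.length_append, List.length_singleton] at hν
              omega
            subst hνe
            rw [hgetL] at hne
            rw [hendD_L] at hend
            have hx2 : 0 < x.2.length := List.length_pos_iff.mpr hne
            omega
        exact ⟨(decompSeq E ++ y.1).length + b, hbound,
          fun μ => if μ < D.length then
              n μ + (if μ + 1 < D.length then n' μ else 0)
                + (if μ + 1 = D.length then q + 1 else 0)
            else if μ = D.length then 0 else 0, hEff, hb', hc'⟩
      · push_neg at hB1
        by_cases hB2 : i - (decompSeq (replicateDecomp D n n')).length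
            ≤ rep.length + x.1.length
        · -- inside σ' of the new block
          obtain ⟨j2, hj2⟩ : ∃ j2, i - (decompSeq (replicateDecomp D n n')).length
              = rep.length + j2 :=
            ⟨i - (decompSeq (replicateDecomp D n n')).length - rep.length, by omega⟩
          have hj2b : j2 ≤ x.1.length := by omega
          have htake2 : (rep ++ (x.1 ++ (reps2 ++ x.2))).take
                (i - (decompSeq (replicateDecomp D n n')).length)
              = rep ++ x.1.take j2 := by
            rw [hj2, take_append_add, List.take_append_of_le_length hj2b]
          have hbound : (decompSeq D).length + j2 ≤ (decompSeq (D ++ [x])).length := by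
            rw [hσD, List.length_append, List.length_append]
            omega
          have htake2' : (decompSeq (D ++ [x])).take ((decompSeq D).length + j2)
              = decompSeq D ++ x.1.take j2 := by
            rw [hσD, take_append_add, List.take_append_of_le_length hj2b]
          have hEff : ∀ p, N.seqEff ((decompSeq (replicateDecomp (D ++ [x]) n n')).take i) p
              = N.seqEff ((decompSeq (D ++ [x])).take ((decompSeq D).length + j2)) p
                + ∑ μ ∈ Finset.range ((D ++ [x]).length),
                    ((if μ < D.length then
                        n μ + (if μ + 1 < D.length then n' μ else 0)
                          + (if μ + 1 = D.length then n' (D.length - 1) else 0)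
                      else if μ = D.length then 0 else 0 : ℕ) : ℤ)
                      * N.seqEff ((D ++ [x]).getD μ ([], [])).2 p := by
            intro p
            have hLe : N.seqEff ((decompSeq (replicateDecomp (D ++ [x]) n n')).take i) p
                = N.seqEff (decompSeq D) p
                  + (∑ μ ∈ Finset.range D.length,
                      ((n μ + if μ + 1 < D.length then n' μ else 0 : ℕ) : ℤ)
                        * N.seqEff (D.getD μ ([], [])).2 p)
                  + (if D.length = 0 then 0
                      else (n' (D.length - 1) : ℤ)
                        * N.seqEff (D.getD (D.length - 1) ([], [])).2 p)
                  + N.seqEff (x.1.take j2) p := by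
              rw [htakeB, htake2]
              simp only [N.seqEff_append]
              rw [N.seqEff_replicateDecomp, hrepval p]
              ring
            have hS := N.sumB n n' D x (n' (D.length - 1)) 0 p
            rw [hLe, htake2', N.seqEff_append, hS]
            push_cast
            ring
          have hsupp : ∀ μ, (if μ < D.length then
                n μ + (if μ + 1 < D.length then n' μ else 0)
                  + (if μ + 1 = D.length then n' (D.length - 1) else 0)
              else if μ = D.length then 0 else 0) ≠ 0 → μ < D.length := by
            intro μ h
            by_contra hcon
            apply h
            rw [if_neg hcon]
            simp
          have hb' : ∀ μ, (if μ < D.length then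
                n μ + (if μ + 1 < D.length then n' μ else 0)
                  + (if μ + 1 = D.length then n' (D.length - 1) else 0)
              else if μ = D.length then 0 else 0) ≠ 0 →
              μ < (D ++ [x]).length ∧
                ∀ ν < μ, endPos (replicateDecomp (D ++ [x]) n n') ν ≤ i := by
            intro μ h
            have hμL := hsupp μ h
            exact ⟨by simp only [List.length_append, List.length_singleton]; omega,
              fun ν hν => hbound_all ν (by omega)⟩
          have hc' : ∀ ν < (D ++ [x]).length, ((D ++ [x]).getD ν ([], [])).2 ≠ [] →
              endPos (D ++ [x]) ν ≤ (decompSeq D).length + j2 →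
              endPos (replicateDecomp (D ++ [x]) n n') ν ≤ i := by
            intro ν hν hne hend
            by_cases hνL : ν < D.length
            · exact hbound_all ν hνL
            · have hνe : ν = D.length := by
                simp only [List.length_append, List.length_singleton] at hν
                omega
              subst hνe
              rw [hgetL] at hne
              rw [hendD_L] at hend
              have hx2 : 0 < x.2.length := List.length_pos_iff.mpr hne
              omega
          exact ⟨(decompSeq D).length + j2, hbound,
            fun μ => if μ < D.length then
                n μ + (if μ + 1 < D.length then n' μ else 0)
                  + (if μ + 1 = D.length then n' (D.length - 1) else 0)
              else if μ = D.length then 0 else 0, hEff, hb', hc'⟩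
        · -- inside the trailing copies of the new pumping portion
          push_neg at hB2
          obtain ⟨j3, hj3⟩ : ∃ j3, i - (decompSeq (replicateDecomp D n n')).length
              = rep.length + (x.1.length + j3) :=
            ⟨i - (decompSeq (replicateDecomp D n n')).length - rep.length - x.1.length,
              by omega⟩
          have hj3pos : 1 ≤ j3 := by omega
          have hj3ub : j3 ≤ reps2.length + x.2.length := by omega
          have hx2ne : x.2 ≠ [] := by
            intro h
            have h1 : x.2.length = 0 := by rw [h]; rfl
            have h2 : reps2.length = 0 := by rw [hreps2len, h1, Nat.mul_zero]
            omega
          have hj3le : j3 ≤ (n D.length + 1) * x.2.length := by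
            rw [Nat.succ_mul, ← hreps2len]
            exact hj3ub
          obtain ⟨q, b, hb_lt, heq⟩ :=
            take_flatten_replicate hx2ne (n D.length + 1) j3 hj3le
          have hflat : reps2 ++ x.2 = (List.replicate (n D.length + 1) x.2).flatten := by
            rw [hreps2def, List.replicate_succ']
            simp [List.flatten_append]
          have htake3 : (rep ++ (x.1 ++ (reps2 ++ x.2))).take
                (i - (decompSeq (replicateDecomp D n n')).length)
              = rep ++ (x.1 ++ ((List.replicate q x.2).flatten ++ x.2.take b)) := by
            rw [hj3, take_append_add, take_append_add, hflat, heq]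
          have hbound : (decompSeq D).length + (x.1.length + b)
              ≤ (decompSeq (D ++ [x])).length := by
            rw [hσD, List.length_append, List.length_append]
            omega
          have htake3' : (decompSeq (D ++ [x])).take
                ((decompSeq D).length + (x.1.length + b))
              = decompSeq D ++ (x.1 ++ x.2.take b) := by
            rw [hσD, take_append_add, take_append_add]
          have hEff : ∀ p, N.seqEff ((decompSeq (replicateDecomp (D ++ [x]) n n')).take i) p
              = N.seqEff ((decompSeq (D ++ [x])).take
                    ((decompSeq D).length + (x.1.length + b))) p
                + ∑ μ ∈ Finset.range ((D ++ [x]).length),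
                    ((if μ < D.length then
                        n μ + (if μ + 1 < D.length then n' μ else 0)
                          + (if μ + 1 = D.length then n' (D.length - 1) else 0)
                      else if μ = D.length then q else 0 : ℕ) : ℤ)
                      * N.seqEff ((D ++ [x]).getD μ ([], [])).2 p := by
            intro p
            have hLe : N.seqEff ((decompSeq (replicateDecomp (D ++ [x]) n n')).take i) p
                = N.seqEff (decompSeq D) p
                  + (∑ μ ∈ Finset.range D.length,
                      ((n μ + if μ + 1 < D.length then n' μ else 0 : ℕ) : ℤ)
                        * N.seqEff (D.getD μ ([], [])).2 p)
                  + (if D.length = 0 then 0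
                      else (n' (D.length - 1) : ℤ)
                        * N.seqEff (D.getD (D.length - 1) ([], [])).2 p)
                  + N.seqEff x.1 p + (q : ℤ) * N.seqEff x.2 p
                  + N.seqEff (x.2.take b) p := by
              rw [htakeB, htake3]
              simp only [N.seqEff_append]
              rw [N.seqEff_flatten_replicate, N.seqEff_replicateDecomp, hrepval p]
              ring
            have hS := N.sumB n n' D x (n' (D.length - 1)) q p
            rw [hLe, htake3', N.seqEff_append, N.seqEff_append, hS]
            push_cast
            ring
          have hsupp : ∀ μ, (if μ < D.length then
                n μ + (if μ + 1 < D.length then n' μ else 0)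
                  + (if μ + 1 = D.length then n' (D.length - 1) else 0)
              else if μ = D.length then q else 0) ≠ 0 → μ < D.length + 1 := by
            intro μ h
            by_contra hcon
            apply h
            rw [if_neg (by omega), if_neg (by omega)]
          have hb' : ∀ μ, (if μ < D.length then
                n μ + (if μ + 1 < D.length then n' μ else 0)
                  + (if μ + 1 = D.length then n' (D.length - 1) else 0)
              else if μ = D.length then q else 0) ≠ 0 →
              μ < (D ++ [x]).length ∧
                ∀ ν < μ, endPos (replicateDecomp (D ++ [x]) n n') ν ≤ i := by
            intro μ h
            have hμL := hsupp μ h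
            exact ⟨by simp only [List.length_append, List.length_singleton]; omega,
              fun ν hν => hbound_all ν (by omega)⟩
          have hc' : ∀ ν < (D ++ [x]).length, ((D ++ [x]).getD ν ([], [])).2 ≠ [] →
              endPos (D ++ [x]) ν ≤ (decompSeq D).length + (x.1.length + b) →
              endPos (replicateDecomp (D ++ [x]) n n') ν ≤ i := by
            intro ν hν hne hend
            by_cases hνL : ν < D.length
            · exact hbound_all ν hνL
            · have hνe : ν = D.length := by
                simp only [List.length_append, List.length_singleton] at hν
                omega
              subst hνe
              rw [hendD_L] at hend
              omega
          exact ⟨(decompSeq D).length + (x.1.length + b), hbound,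
            fun μ => if μ < D.length then
                n μ + (if μ + 1 < D.length then n' μ else 0)
                  + (if μ + 1 = D.length then n' (D.length - 1) else 0)
              else if μ = D.length then q else 0, hEff, hb', hc'⟩

/-- Inserting extra copies of the pumping portions preserves weakly enabled
pumping sequences. -/
theorem weak_pumping_replicate {P T : Type} [Fintype P] [Fintype T]
    (N : PetriNet P T) (W : ℕ) (hW : N.WeightBound W)
    (VC : Set P) (hVC : N.IsVertexCover VC) (C : N.SpecialChoice VC)
    (Q Y X : Set P) (hQ : N.indepSet VC C ⊆ Q) (hX : X.Nonempty)
    (M : P → ℤ) (D : List (List T × List T))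
    (hD : N.IsWeakPumping (N.indepSet VC C) Q Y X M ⊤ D) (n n' : ℕ → ℕ) :
    N.IsWeakPumping (N.indepSet VC C) Q Y X M ⊤ (replicateDecomp D n n') := by
  obtain ⟨h1, h2, h3, h4⟩ := hD
  have hRlen : (replicateDecomp D n n').length = D.length := by
    simp [replicateDecomp]
  have hsnd : ∀ (l : ℕ) (hl : l < (replicateDecomp D n n').length),
      ((replicateDecomp D n n').get ⟨l, hl⟩).2 = (D.getD l ([], [])).2 := by
    intro l hl
    have hl' : l < D.length := by omega
    rw [List.getD_eq_getElem _ _ hl']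
    simp [replicateDecomp, List.get_eq_getElem, List.getElem_mapIdx]
  have hget : ∀ (l : ℕ) (hl : l < D.length),
      (D.get ⟨l, hl⟩).2 = (D.getD l ([], [])).2 := by
    intro l hl
    rw [List.getD_eq_getElem _ _ hl]
    simp [List.get_eq_getElem]
  refine ⟨?_, ?_, ?_, ?_⟩
  · intro l hl p hneg
    have hl' : l < D.length := by omega
    rw [hsnd, ← hget l hl'] at hneg
    rcases h1 l hl' p hneg with ⟨μ, hμ, hpos⟩ | hY
    · rw [hget] at hpos
      exact Or.inl ⟨μ, hμ, by rw [hsnd]; exact hpos⟩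
    · exact Or.inr hY
  · intro x hx
    obtain ⟨hxY, l, hl, hpos⟩ := h2 x hx
    rw [hget] at hpos
    exact ⟨hxY, l, by omega, by rw [hsnd]; exact hpos⟩
  · intro i _ q _ _
    exact WithTop.coe_lt_top _
  · intro i hi p hp hneg
    obtain ⟨i₀, hi₀, c, ha, hb, hc⟩ := N.corr n n' D i hi
    by_cases hbad : ∃ μ, μ < D.length ∧ c μ ≠ 0 ∧
        N.seqEff (D.getD μ ([], [])).2 p < 0
    · obtain ⟨μ, hμ, hcμ, hnegμ⟩ := hbad
      rw [← hget μ hμ] at hnegμ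
      rcases h1 μ hμ p hnegμ with ⟨ν, hν, hpos⟩ | hY
      · rw [hget] at hpos
        refine Or.inl ⟨ν, by omega, (hb μ hcμ).2 ν hν, ?_⟩
        rw [hsnd]
        exact hpos
      · exact Or.inr hY
    · push_neg at hbad
      have hsumnn : 0 ≤ ∑ μ ∈ Finset.range D.length,
          (c μ : ℤ) * N.seqEff (D.getD μ ([], [])).2 p := by
        apply Finset.sum_nonneg
        intro μ hμ
        rcases Nat.eq_zero_or_pos (c μ) with h | h
        · simp [h]
        · exact mul_nonneg (Int.natCast_nonneg _)
            (hbad μ (Finset.mem_range.mp hμ) (by omega))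
      have hlt : M p + N.seqEff ((decompSeq D).take i₀) p < 0 := by
        rw [ha p] at hneg
        linarith
      rcases h4 i₀ hi₀ p hp hlt with ⟨μ, hμ, hend, hpos⟩ | hY
      · rw [hget] at hpos
        have hne : (D.getD μ ([], [])).2 ≠ [] := by
          intro h
          rw [h] at hpos
          simp [seqEff] at hpos
        refine Or.inl ⟨μ, by omega, hc μ hμ hne hend, ?_⟩
        rw [hsnd]
        exact hpos
      · exact Or.inr hY

end PetriNet
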